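/- Hardy-type inequality: for h : ℝ → ℝ differentiable with x² h'(x) ∈ L²(ℝ) and h(x) → 0 as |x| → ∞, one has ‖x h(x)‖_{L²(ℝ)} ≤ C ‖x² h'(x)‖_{L²(ℝ)} for a universal constant C. -/

import Mathlib

open MeasureTheory Real Filter Set Topology

private lemma hardy_comp_neg {f : ℝ → ℝ} (hf : Integrable f) :
    Integrable (fun x => f (-x)) :=
  ((Measure.measurePreserving_neg (volume : Measure ℝ)).integrable_comp_emb
    (Homeomorph.neg ℝ).isClosedEmbedding.measurableEmbedding).2 hf

private lemma hardy_abs_bound (a b : ℝ) :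
    (2/3) * |a * b| ≤ (1/2) * a ^ 2 + (2/9) * b ^ 2 := by
  rcases abs_cases (a * b) with ⟨h1, _⟩ | ⟨h1, _⟩ <;> rw [h1] <;>
    nlinarith [sq_nonneg (3*a - 2*b), sq_nonneg (3*a + 2*b)]

/-- Hardy inequality on the half line `Ioi 0`. -/
private lemma hardy_half (h : ℝ → ℝ) (hcd : ContDiff ℝ 1 h)
    (hI : Integrable (fun x : ℝ => (x ^ 2 * deriv h x) ^ 2))
    (hJ : Integrable (fun x : ℝ => (x * h x) ^ 2))
    (htop : Tendsto h atTop (nhds 0)) :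
    (∫ x in Ioi (0:ℝ), (x * h x) ^ 2) ≤
      (4/9) * ∫ x in Ioi (0:ℝ), (x ^ 2 * deriv h x) ^ 2 := by
  have hd : ∀ x, HasDerivAt h (deriv h x) x :=
    fun x => (hcd.differentiable one_ne_zero x).hasDerivAt
  have hch : Continuous h := hcd.continuous
  have hcd' : Continuous (deriv h) := hcd.continuous_deriv le_rfl
  set f : ℝ → ℝ := fun x => x ^ 3 * (h x) ^ 2 / 3 with hf_def
  set g : ℝ → ℝ := fun x => (2/3) * ((x * h x) * (x ^ 2 * deriv h x)) with hg_def
  have hder : ∀ x, HasDerivAt f ((x * h x) ^ 2 + g x) x := by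
    intro x
    have h2 : HasDerivAt (fun y => (h y) ^ 2) (2 * h x * deriv h x) x := by
      simpa [mul_comm, mul_assoc] using (hd x).fun_pow 2
    have := ((hasDerivAt_pow 3 x).fun_mul h2).div_const 3
    refine this.congr_deriv ?_
    push_cast
    ring
  have hgabs : ∀ x, |g x| ≤ (1/2) * (x * h x) ^ 2 + (2/9) * (x ^ 2 * deriv h x) ^ 2 := by
    intro x
    have := hardy_abs_bound (x * h x) (x ^ 2 * deriv h x)
    calc |g x| = (2/3) * |(x * h x) * (x ^ 2 * deriv h x)| := by
          rw [hg_def]; rw [abs_mul]; norm_num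
      _ ≤ _ := this
  have hgc : Continuous g := by fun_prop
  have hg_int : Integrable g := by
    refine ((hJ.const_mul (1/2)).add (hI.const_mul (2/9))).mono' hgc.aestronglyMeasurable ?_
    exact ae_of_all _ fun x => by simpa [Real.norm_eq_abs] using hgabs x
  have hf'c : Continuous fun x => (x * h x) ^ 2 + g x := by fun_prop
  have hf'_int : Integrable (fun x => (x * h x) ^ 2 + g x) := hJ.add hg_int
  -- the limit of f at infinity exists
  set M : ℝ := ∫ x in Ioi (1:ℝ), ((x * h x) ^ 2 + g x) with hM_def
  have hlim : Tendsto f atTop (𝓝 (M + f 1)) := by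
    have h1 : Tendsto (fun b => ∫ x in (1:ℝ)..b, ((x * h x) ^ 2 + g x)) atTop (𝓝 M) :=
      intervalIntegral_tendsto_integral_Ioi 1 hf'_int.integrableOn tendsto_id
    have h2 : ∀ b : ℝ, ∫ x in (1:ℝ)..b, ((x * h x) ^ 2 + g x) = f b - f 1 := fun b =>
      intervalIntegral.integral_eq_sub_of_hasDerivAt (fun x _ => hder x)
        hf'_int.intervalIntegrable
    have h3 : Tendsto (fun b => f b - f 1) atTop (𝓝 M) := by
      simpa only [h2] using h1
    simpa using h3.add_const (f 1)
  -- the limit must be 0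
  have hfnn : ∀ᶠ x in atTop, 0 ≤ f x := by
    filter_upwards [eventually_ge_atTop (0:ℝ)] with x hx
    positivity
  set L := M + f 1 with hL_def
  have hL0 : 0 ≤ L := ge_of_tendsto hlim hfnn
  have hLzero : L = 0 := by
    by_contra hne
    have hLpos : 0 < L := lt_of_le_of_ne hL0 (Ne.symm hne)
    have hev : ∀ᶠ x in atTop, L/2 ≤ f x ∧ (1:ℝ) ≤ x :=
      (hlim.eventually_const_le (show L/2 < L by linarith)).and (eventually_ge_atTop 1)
    obtain ⟨N, hN⟩ := hev.exists_forall_of_atTop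
    have hNpos : (0:ℝ) < N := lt_of_lt_of_le one_pos (hN N le_rfl).2
    have hint : IntegrableOn (fun x : ℝ => (3*L/2) * x⁻¹) (Ioi N) := by
      refine (hJ.integrableOn).mono' ((measurable_inv.const_mul _).aestronglyMeasurable) ?_
      rw [ae_restrict_iff' measurableSet_Ioi]
      refine ae_of_all _ fun x hx => ?_
      have hxN : N < x := hx
      have hx0 : 0 < x := lt_trans hNpos hxN
      have hfx : L/2 ≤ f x := (hN x hxN.le).1
      have : 3 * L / 2 ≤ x ^ 3 * (h x) ^ 2 := by
        have : x ^ 3 * (h x) ^ 2 / 3 ≥ L / 2 := hfx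
        linarith
      have hxinv : (3*L/2) * x⁻¹ ≤ (x * h x) ^ 2 := by
        rw [mul_inv_le_iff₀ hx0]
        calc 3*L/2 ≤ x ^ 3 * (h x) ^ 2 := this
          _ = (x * h x) ^ 2 * x := by ring
      have hpos : 0 ≤ (3*L/2) * x⁻¹ := by positivity
      rw [Real.norm_eq_abs, abs_of_nonneg hpos]
      exact hxinv
    have hint2 : IntegrableOn (fun x : ℝ => x ^ (-1 : ℝ)) (Ioi N) := by
      have h3L : (3*L/2) ≠ 0 := by positivity
      have H := hint.const_mul (3*L/2)⁻¹
      refine H.congr ((ae_restrict_iff' measurableSet_Ioi).2 (ae_of_all _ fun x hx => ?_))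
      show (3*L/2)⁻¹ * (3*L/2 * x⁻¹) = x ^ (-1:ℝ)
      rw [Real.rpow_neg_one, inv_mul_cancel_left₀ h3L]
    have := (integrableOn_Ioi_rpow_iff hNpos).1 hint2
    linarith
  rw [hLzero] at hlim
  -- FTC on the half line
  have hFTC : (∫ x in Ioi (0:ℝ), ((x * h x) ^ 2 + g x)) = 0 - f 0 :=
    integral_Ioi_of_hasDerivAt_of_tendsto
      ((by fun_prop : Continuous f).continuousWithinAt)
      (fun x _ => hder x) hf'_int.integrableOn hlim
  have hf0 : f 0 = 0 := by simp [hf_def]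
  rw [hf0, sub_zero] at hFTC
  have hsplit : (∫ x in Ioi (0:ℝ), ((x * h x) ^ 2 + g x)) =
      (∫ x in Ioi (0:ℝ), (x * h x) ^ 2) + ∫ x in Ioi (0:ℝ), g x :=
    integral_add hJ.integrableOn hg_int.integrableOn
  have key : (∫ x in Ioi (0:ℝ), (x * h x) ^ 2) = - ∫ x in Ioi (0:ℝ), g x := by
    rw [hsplit] at hFTC; linarith
  have habs : - (∫ x in Ioi (0:ℝ), g x) ≤ ∫ x in Ioi (0:ℝ), |g x| := by
    have := norm_integral_le_integral_norm (μ := volume.restrict (Ioi (0:ℝ))) g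
    simp only [Real.norm_eq_abs] at this
    calc -(∫ x in Ioi (0:ℝ), g x) ≤ |∫ x in Ioi (0:ℝ), g x| := neg_le_abs _
      _ ≤ _ := this
  have hmono : (∫ x in Ioi (0:ℝ), |g x|) ≤
      ∫ x in Ioi (0:ℝ), ((1/2) * (x * h x) ^ 2 + (2/9) * (x ^ 2 * deriv h x) ^ 2) := by
    refine integral_mono hg_int.abs.integrableOn ?_ hgabs
    exact ((hJ.const_mul (1/2)).add (hI.const_mul (2/9))).integrableOn
  have hs2 : (∫ x in Ioi (0:ℝ), ((1/2) * (x * h x) ^ 2 + (2/9) * (x ^ 2 * deriv h x) ^ 2)) =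
      (1/2) * (∫ x in Ioi (0:ℝ), (x * h x) ^ 2) +
        (2/9) * ∫ x in Ioi (0:ℝ), (x ^ 2 * deriv h x) ^ 2 := by
    rw [integral_add ((hJ.const_mul (1/2)).integrableOn) ((hI.const_mul (2/9)).integrableOn),
      integral_const_mul, integral_const_mul]
  have := key.le.trans (habs.trans (hmono.trans hs2.le))
  linarith

theorem hardy_inequality :
    ∃ C : ℝ, 0 < C ∧ ∀ h : ℝ → ℝ, ContDiff ℝ 1 h →
      Integrable (fun x : ℝ => (x ^ 2 * deriv h x) ^ 2) →
      Tendsto h atTop (nhds 0) → Tendsto h atBot (nhds 0) →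
      Real.sqrt (∫ x : ℝ, (x * h x) ^ 2) ≤
        C * Real.sqrt (∫ x : ℝ, (x ^ 2 * deriv h x) ^ 2) := by
  refine ⟨1, one_pos, fun h hcd hI htop hbot => ?_⟩
  rw [one_mul]
  by_cases hJ : Integrable (fun x : ℝ => (x * h x) ^ 2)
  swap
  · rw [integral_undef hJ, Real.sqrt_zero]
    exact Real.sqrt_nonneg _
  -- positive half
  have hpos := hardy_half h hcd hI hJ htop
  -- negative half by reflection
  set g : ℝ → ℝ := fun x => h (-x) with hg_def
  have hgcd : ContDiff ℝ 1 g := hcd.comp (contDiff_id.neg)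
  have hdg : ∀ x, deriv g x = deriv h (-x) * (-1) := by
    intro x
    have : HasDerivAt g (deriv h (-x) * (-1)) x :=
      ((hcd.differentiable one_ne_zero (-x)).hasDerivAt).comp x (hasDerivAt_neg x)
    exact this.deriv
  have hgI : Integrable (fun x : ℝ => (x ^ 2 * deriv g x) ^ 2) := by
    have := hardy_comp_neg hI
    refine this.congr (ae_of_all _ fun x => ?_)
    simp only [hdg x]
    ring
  have hgJ : Integrable (fun x : ℝ => (x * g x) ^ 2) := by
    have := hardy_comp_neg hJ
    refine this.congr (ae_of_all _ fun x => ?_)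
    simp only [hg_def]
    ring
  have hgtop : Tendsto g atTop (nhds 0) := hbot.comp tendsto_neg_atTop_atBot
  have hneg := hardy_half g hgcd hgI hgJ hgtop
  -- translate reflected integrals
  have e1 : (∫ x in Ioi (0:ℝ), (x * g x) ^ 2) = ∫ x in Iic (0:ℝ), (x * h x) ^ 2 := by
    have : (∫ x in Ioi (0:ℝ), (x * g x) ^ 2) =
        ∫ x in Ioi (0:ℝ), ((-x) * h (-x)) ^ 2 := by
      refine setIntegral_congr_fun measurableSet_Ioi fun x _ => ?_
      simp only [hg_def]; ring
    rw [this]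
    exact (integral_comp_neg_Ioi 0 (fun y => (y * h y) ^ 2)).trans (by rw [neg_zero])
  have e2 : (∫ x in Ioi (0:ℝ), (x ^ 2 * deriv g x) ^ 2) =
      ∫ x in Iic (0:ℝ), (x ^ 2 * deriv h x) ^ 2 := by
    have : (∫ x in Ioi (0:ℝ), (x ^ 2 * deriv g x) ^ 2) =
        ∫ x in Ioi (0:ℝ), ((-x) ^ 2 * deriv h (-x)) ^ 2 := by
      refine setIntegral_congr_fun measurableSet_Ioi fun x _ => ?_
      simp only [hdg x]; ring
    rw [this]
    exact (integral_comp_neg_Ioi 0 (fun y => (y ^ 2 * deriv h y) ^ 2)).trans (by rw [neg_zero])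
  rw [e1, e2] at hneg
  have hJsplit : (∫ x in Iic (0:ℝ), (x * h x) ^ 2) + (∫ x in Ioi (0:ℝ), (x * h x) ^ 2) =
      ∫ x : ℝ, (x * h x) ^ 2 := intervalIntegral.integral_Iic_add_Ioi hJ.integrableOn hJ.integrableOn
  have hIsplit : (∫ x in Iic (0:ℝ), (x ^ 2 * deriv h x) ^ 2) +
      (∫ x in Ioi (0:ℝ), (x ^ 2 * deriv h x) ^ 2) = ∫ x : ℝ, (x ^ 2 * deriv h x) ^ 2 :=
    intervalIntegral.integral_Iic_add_Ioi hI.integrableOn hI.integrableOn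
  have hIic1 : (0:ℝ) ≤ ∫ x in Iic (0:ℝ), (x ^ 2 * deriv h x) ^ 2 :=
    setIntegral_nonneg measurableSet_Iic fun x _ => sq_nonneg _
  have hIoi : (0:ℝ) ≤ ∫ x in Ioi (0:ℝ), (x ^ 2 * deriv h x) ^ 2 :=
    setIntegral_nonneg measurableSet_Ioi fun x _ => sq_nonneg _
  have hfinal : (∫ x : ℝ, (x * h x) ^ 2) ≤ ∫ x : ℝ, (x ^ 2 * deriv h x) ^ 2 := by
    rw [← hJsplit, ← hIsplit]
    linarith
  exact Real.sqrt_le_sqrt hfinal
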